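/- Let K be a field and q ∈ K with q nonzero and q^m ≠ 1 for all integers m ≥ 1. Then the following identity holds in the formal power series ring K⟦Z⟧: ∑_{d₁,d₂ ≥ 0} (−1)^{d₁} Z^{2d₁+d₂} q^{d₁(d₁+1)/2} · (q;q)_{d₁+d₂} / ((q;q)_{d₁}(q;q)_{d₂}) = ∑_{α₁,β₁,α₂,β₂ ≥ 0} (−1)^{β₁+α₂} Z^{2(α₁+β₁)+α₂+β₂} q^{ (α₁+β₁)(α₁+β₁+1)/2 + α₁(α₁+1)/2 + α₂(α₂+1)/2 + α₂(α₁+β₁) } / ((q;q)_{α₁}(q;q)_{β₁}(q;q)_{α₂}(q;q)_{β₂}). (Both sides are formally summable in K⟦Z⟧, the Z-order of each term being the exponent of Z shown.) -/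

import Mathlib

/-- The q-Pochhammer symbol `(q;q)_n = ∏_{k=1}^{n} (1 − qᵏ)`. -/
def pochQ {K : Type*} [Field K] (q : K) (n : ℕ) : K :=
  ∏ k ∈ Finset.range n, (1 - q ^ (k + 1))

open Finset

section Aux
variable {K : Type*} [Field K] (q : K)

lemma pochQ_ne_zero (hq : ∀ m : ℕ, 1 ≤ m → q ^ m ≠ 1) (n : ℕ) : pochQ q n ≠ 0 := by
  unfold pochQ
  refine Finset.prod_ne_zero_iff.2 fun k _ => ?_
  exact sub_ne_zero.2 fun h => hq (k+1) (by omega) h.symm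

lemma pochQ_succ (n : ℕ) : pochQ q (n+1) = pochQ q n * (1 - q ^ (n+1)) :=
  Finset.prod_range_succ _ _

lemma pochQ_zero : pochQ q 0 = 1 := rfl

/-- finite q-binomial sum -/
def Ssum (q x : K) (n : ℕ) : K :=
  ∑ a ∈ Finset.range (n+1), (-1:K)^a * q^(a*(a+1)/2) * x^a / (pochQ q a * pochQ q (n-a))

lemma Ssum_rec (hq : ∀ m : ℕ, 1 ≤ m → q ^ m ≠ 1) (x : K) (n : ℕ) :
    (1 - q^(n+1)) * Ssum q x (n+1) = (1 - x*q) * Ssum q (x*q) n := by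
  have hP := pochQ_ne_zero q hq
  have h1 : ∀ m : ℕ, 1 ≤ m → (1 : K) - q ^ m ≠ 0 := fun m hm =>
    sub_ne_zero.2 fun h => hq m hm h.symm
  have key : ∀ a ∈ Finset.range (n+2),
      (1 - q^(n+1)) * ((-1:K)^a * q^(a*(a+1)/2) * x^a / (pochQ q a * pochQ q (n+1-a)))
      = (if a = n+1 then 0 else (-1:K)^a * q^(a*(a+1)/2) * (x*q)^a / (pochQ q a * pochQ q (n-a)))
        + (if a = 0 then 0 else (-1:K)^a * q^(a*(a+1)/2) * x^a / (pochQ q (a-1) * pochQ q (n+1-a))) := by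
    intro a ha
    rw [Finset.mem_range] at ha
    rcases Nat.eq_zero_or_pos a with rfl | hapos
    · rw [if_neg (by omega : ¬ (0 = n+1)), if_pos rfl, add_zero]
      rw [Nat.sub_zero, Nat.sub_zero, pochQ_succ]
      have h0 := h1 (n+1) (by omega)
      rw [show pochQ q 0 * (pochQ q n * (1 - q^(n+1))) = pochQ q 0 * pochQ q n * (1 - q^(n+1)) from
        (mul_assoc _ _ _).symm, ← div_div, mul_comm, div_mul_cancel₀ _ h0]
      norm_num
    · rcases Nat.eq_or_lt_of_le (by omega : a ≤ n + 1) with h | h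
      · subst h
        rw [if_pos rfl, if_neg (by omega), zero_add]
        rw [Nat.sub_self, Nat.add_sub_cancel, pochQ_succ]
        have h0 := h1 (n+1) (by omega)
        rw [show pochQ q n * (1 - q^(n+1)) * pochQ q 0 = pochQ q n * pochQ q 0 * (1 - q^(n+1)) from
          by ring, ← div_div, mul_comm, div_mul_cancel₀ _ h0]
      · -- 1 ≤ a ≤ n
        obtain ⟨b, rfl⟩ : ∃ b, a = b + 1 := ⟨a - 1, by omega⟩
        rw [if_neg (by omega), if_neg (by omega)]
        rw [show n + 1 - (b+1) = (n-b-1)+1 from by omega,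
          show n - (b+1) = n-b-1 from by omega, Nat.add_sub_cancel]
        rw [pochQ_succ q (n-b-1), pochQ_succ q b]
        rw [show n + 1 = (b+1) + (n-b-1+1) from by omega, pow_add]
        have hb1 := h1 (b+1) (by omega)
        have hb2 := h1 (n-b-1+1) (by omega)
        have hPb := hP b
        have hPn := hP (n-b-1)
        field_simp
        ring
  unfold Ssum
  rw [Finset.mul_sum, Finset.sum_congr rfl key, Finset.sum_add_distrib]
  have e1 : (∑ a ∈ Finset.range (n+2),
      if a = n+1 then (0:K) else (-1:K)^a * q^(a*(a+1)/2) * (x*q)^a / (pochQ q a * pochQ q (n-a)))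
      = ∑ a ∈ Finset.range (n+1), (-1:K)^a * q^(a*(a+1)/2) * (x*q)^a / (pochQ q a * pochQ q (n-a)) := by
    rw [Finset.sum_range_succ, if_pos rfl, add_zero]
    refine Finset.sum_congr rfl fun a ha => ?_
    rw [Finset.mem_range] at ha
    rw [if_neg (by omega)]
  have e2 : (∑ a ∈ Finset.range (n+2),
      if a = 0 then (0:K) else (-1:K)^a * q^(a*(a+1)/2) * x^a / (pochQ q (a-1) * pochQ q (n+1-a)))
      = -(x*q) * ∑ a ∈ Finset.range (n+1), (-1:K)^a * q^(a*(a+1)/2) * (x*q)^a / (pochQ q a * pochQ q (n-a)) := by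
    rw [Finset.sum_range_succ', if_pos rfl, add_zero, Finset.mul_sum]
    refine Finset.sum_congr rfl fun i hi => ?_
    rw [if_neg (by omega)]
    rw [show i + 1 - 1 = i from by omega, show n + 1 - (i+1) = n - i from by omega]
    have he : (i+1)*(i+1+1)/2 = i*(i+1)/2 + (i+1) := by
      have h2 : (i+1)*(i+1+1) = i*(i+1)+2*(i+1) := by ring
      omega
    rw [he, pow_add]
    ring
  rw [e1, e2]
  ring


lemma Ssum_eq (hq : ∀ m : ℕ, 1 ≤ m → q ^ m ≠ 1) (n : ℕ) (x : K) :
    Ssum q x n = (∏ k ∈ Finset.range n, (1 - x * q^(k+1))) / pochQ q n := by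
  have hP := pochQ_ne_zero q hq
  have h1 : ∀ m : ℕ, 1 ≤ m → (1 : K) - q ^ m ≠ 0 := fun m hm =>
    sub_ne_zero.2 fun h => hq m hm h.symm
  induction n generalizing x with
  | zero => unfold Ssum; simp [pochQ_zero]
  | succ n ih =>
    have h0 := h1 (n+1) (by omega)
    have hrec := Ssum_rec q hq x n
    have : Ssum q x (n+1) = (1 - x*q) * Ssum q (x*q) n / (1 - q^(n+1)) := by
      rw [eq_div_iff h0, mul_comm, ← hrec]
    rw [this, ih (x*q), pochQ_succ, Finset.prod_range_succ']
    have hterm : ∀ k, (1 : K) - x * q ^ (k + 1 + 1) = 1 - (x*q) * q^(k+1) := by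
      intro k; rw [pow_succ]; ring
    rw [Finset.prod_congr rfl fun k _ => hterm k]
    field_simp
    ring

lemma Ssum_one (hq : ∀ m : ℕ, 1 ≤ m → q ^ m ≠ 1) (n : ℕ) :
    Ssum q (1:K) n = 1 := by
  rw [Ssum_eq q hq]
  have : (∏ k ∈ Finset.range n, (1 - (1:K) * q^(k+1))) = pochQ q n := by
    unfold pochQ; exact Finset.prod_congr rfl fun k _ => by rw [one_mul]
  rw [this, div_self (pochQ_ne_zero q hq n)]

lemma Ssum_pow (hq : ∀ m : ℕ, 1 ≤ m → q ^ m ≠ 1) (m n : ℕ) :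
    Ssum q (q^m) n = pochQ q (m+n) / (pochQ q m * pochQ q n) := by
  rw [Ssum_eq q hq]
  have hprod : pochQ q (m+n) = pochQ q m * ∏ k ∈ Finset.range n, (1 - q^m * q^(k+1)) := by
    unfold pochQ
    rw [Finset.prod_range_add]
    congr 1
    refine Finset.prod_congr rfl fun k _ => ?_
    rw [← pow_add, Nat.add_assoc]
  rw [hprod, mul_div_mul_left _ _ (pochQ_ne_zero q hq m)]

lemma sum_pair_collapse {M : Type*} [AddCommMonoid M] (N d : ℕ) (hd : d ≤ N) (F : ℕ → ℕ → M) :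
    (∑ a ∈ Finset.range (N+1), ∑ b ∈ Finset.range (N+1), if a + b = d then F a b else 0)
    = ∑ a ∈ Finset.range (d+1), F a (d - a) := by
  have inner : ∀ a ∈ Finset.range (N+1),
      (∑ b ∈ Finset.range (N+1), if a + b = d then F a b else 0)
      = if a ≤ d then F a (d-a) else 0 := by
    intro a _
    by_cases h : a ≤ d
    · rw [if_pos h, Finset.sum_eq_single (d - a)]
      · rw [if_pos (by omega)]
      · intro b _ hb; rw [if_neg (by omega)]
      · intro hmem; exact absurd (Finset.mem_range.2 (by omega)) hmem
    · rw [if_neg h]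
      exact Finset.sum_eq_zero fun b _ => if_neg (by omega)
  rw [Finset.sum_congr rfl inner]
  have hsub : Finset.range (d+1) ⊆ Finset.range (N+1) := Finset.range_subset_range.2 (by omega)
  have hzero : ∀ a ∈ Finset.range (N+1), a ∉ Finset.range (d+1) →
      (if a ≤ d then F a (d-a) else 0) = 0 := by
    intro a _ ha
    rw [Finset.mem_range] at ha
    exact if_neg (by omega)
  rw [← Finset.sum_subset hsub hzero]
  refine Finset.sum_congr rfl fun a ha => ?_
  rw [Finset.mem_range] at ha
  exact if_pos (by omega)

lemma sum_triangle {M : Type*} [AddCommMonoid M] (N : ℕ) (G : ℕ → ℕ → M)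
    (hG : ∀ a b, N < a + b → G a b = 0) :
    (∑ a ∈ Finset.range (N+1), ∑ b ∈ Finset.range (N+1), G a b)
    = ∑ d ∈ Finset.range (N+1), ∑ a ∈ Finset.range (d+1), G a (d - a) := by
  rw [← Finset.sum_product']
  rw [show (∑ d ∈ Finset.range (N+1), ∑ a ∈ Finset.range (d+1), G a (d - a))
      = ∑ x ∈ (Finset.range (N+1)).sigma (fun d => Finset.range (d+1)), G x.2 (x.1 - x.2) from
    Finset.sum_sigma' _ _ _]
  rw [← Finset.sum_subset
    (Finset.filter_subset (fun p : ℕ × ℕ => p.1 + p.2 ≤ N) _)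
    (fun p _ hp => by
      refine hG p.1 p.2 ?_
      by_contra h
      exact hp (Finset.mem_filter.2 ⟨by assumption, by omega⟩))]
  refine Finset.sum_nbij' (fun p => (⟨p.1 + p.2, p.1⟩ : Σ _ : ℕ, ℕ))
    (fun x => (x.2, x.1 - x.2)) ?_ ?_ ?_ ?_ ?_
  · rintro ⟨a, b⟩ hp
    simp only [Finset.mem_filter, Finset.mem_product, Finset.mem_range] at hp
    simp only [Finset.mem_sigma, Finset.mem_range]
    omega
  · rintro ⟨d, a⟩ hx
    simp only [Finset.mem_sigma, Finset.mem_range] at hx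
    simp only [Finset.mem_filter, Finset.mem_product, Finset.mem_range]
    omega
  · rintro ⟨a, b⟩ hp
    simp only [Finset.mem_filter, Finset.mem_product, Finset.mem_range] at hp
    simp only [Nat.add_sub_cancel_left]
  · rintro ⟨d, a⟩ hx
    simp only [Finset.mem_sigma, Finset.mem_range] at hx
    simp only []
    congr 1 <;> omega
  · rintro ⟨a, b⟩ hp
    simp only [Finset.mem_filter, Finset.mem_product, Finset.mem_range] at hp
    simp only [Nat.add_sub_cancel_left]

lemma body_expand (hq : ∀ m : ℕ, 1 ≤ m → q ^ m ≠ 1) (d1 d2 : ℕ) :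
    (-1:K)^d1 * q^(d1*(d1+1)/2) * pochQ q (d1+d2) / (pochQ q d1 * pochQ q d2)
    = ∑ a1 ∈ Finset.range (d1+1), ∑ a2 ∈ Finset.range (d2+1),
        (-1:K)^((d1-a1)+a2) *
          q^(d1*(d1+1)/2 + a1*(a1+1)/2 + a2*(a2+1)/2 + a2*d1) /
          (pochQ q a1 * pochQ q (d1-a1) * pochQ q a2 * pochQ q (d2-a2)) := by
  have hP := pochQ_ne_zero q hq
  have step1 : (-1:K)^d1 * q^(d1*(d1+1)/2) * pochQ q (d1+d2) / (pochQ q d1 * pochQ q d2)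
      = ((-1:K)^d1 * q^(d1*(d1+1)/2)) * Ssum q (1:K) d1 * Ssum q (q^d1) d2 := by
    rw [Ssum_one q hq, mul_one, Ssum_pow q hq, mul_div_assoc]
  rw [step1]
  unfold Ssum
  rw [mul_assoc, Finset.sum_mul_sum]
  simp only [Finset.mul_sum]
  refine Finset.sum_congr rfl fun a1 ha1 => Finset.sum_congr rfl fun a2 ha2 => ?_
  rw [Finset.mem_range] at ha1 ha2
  have hsign : (-1:K)^d1 * (-1:K)^a1 = (-1:K)^(d1-a1) := by
    rw [← pow_add, show d1 + a1 = 2*a1 + (d1-a1) from by omega, pow_add, pow_mul]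
    norm_num
  rw [one_pow, ← pow_mul, Nat.mul_comm d1 a2]
  rw [pow_add (-1:K) (d1-a1) a2, ← hsign]
  rw [pow_add q (d1*(d1+1)/2 + a1*(a1+1)/2 + a2*(a2+1)/2) (a2*d1),
      pow_add q (d1*(d1+1)/2 + a1*(a1+1)/2) (a2*(a2+1)/2),
      pow_add q (d1*(d1+1)/2) (a1*(a1+1)/2)]
  ring

lemma collapse1 {M : Type*} [AddCommMonoid M] (N : ℕ) (F : ℕ → ℕ → M) :
    (∑ d1 ∈ Finset.range (N+1), ∑ d2 ∈ Finset.range (N+1),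
      if 2*d1 + d2 = N then F d1 d2 else 0)
    = ∑ d1 ∈ Finset.range (N+1), if 2*d1 ≤ N then F d1 (N - 2*d1) else 0 := by
  refine Finset.sum_congr rfl fun d1 _ => ?_
  by_cases h : 2*d1 ≤ N
  · rw [if_pos h, Finset.sum_eq_single (N - 2*d1)]
    · rw [if_pos (by omega)]
    · intro b _ hb; exact if_neg (by omega)
    · intro hmem; exact absurd (Finset.mem_range.2 (by omega)) hmem
  · rw [if_neg h]; exact Finset.sum_eq_zero fun b _ => if_neg (by omega)

lemma collapse2 {M : Type*} [AddCommMonoid M] (N : ℕ) (F : ℕ → ℕ → ℕ → ℕ → M) :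
    (∑ a1 ∈ Finset.range (N+1), ∑ b1 ∈ Finset.range (N+1), ∑ a2 ∈ Finset.range (N+1),
      ∑ b2 ∈ Finset.range (N+1),
        if 2*(a1+b1) + a2 + b2 = N then F a1 b1 a2 b2 else 0)
    = ∑ a1 ∈ Finset.range (N+1), ∑ b1 ∈ Finset.range (N+1),
        if 2*(a1+b1) ≤ N then
          (∑ a2 ∈ Finset.range ((N - 2*(a1+b1)) + 1), F a1 b1 a2 (N - 2*(a1+b1) - a2))
        else 0 := by
  refine Finset.sum_congr rfl fun a1 _ => Finset.sum_congr rfl fun b1 _ => ?_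
  by_cases h : 2*(a1+b1) ≤ N
  · rw [if_pos h, ← sum_pair_collapse N (N - 2*(a1+b1)) (by omega) (F a1 b1)]
    refine Finset.sum_congr rfl fun a2 _ => Finset.sum_congr rfl fun b2 _ => ?_
    exact if_congr (by constructor <;> omega) rfl rfl
  · rw [if_neg h]
    exact Finset.sum_eq_zero fun a2 _ => Finset.sum_eq_zero fun b2 _ => if_neg (by omega)

end Aux

/-- Quiver form of the R-matrix state sum for the right-handed trefoil, stated
coefficientwise in `K⟦Z⟧`: the coefficient of `Z^N` in
`∑_{d₁,d₂≥0} (−1)^{d₁} Z^{2d₁+d₂} q^{d₁(d₁+1)/2} (q;q)_{d₁+d₂}/((q;q)_{d₁}(q;q)_{d₂})`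
equals the coefficient of `Z^N` in
`∑_{α₁,β₁,α₂,β₂≥0} (−1)^{β₁+α₂} Z^{2(α₁+β₁)+α₂+β₂}
q^{(α₁+β₁)(α₁+β₁+1)/2 + α₁(α₁+1)/2 + α₂(α₂+1)/2 + α₂(α₁+β₁)} / ∏(q;q)`. -/
theorem trefoil_Rmatrix_quiver_form {K : Type*} [Field K] (q : K) (hq0 : q ≠ 0)
    (hq : ∀ m : ℕ, 1 ≤ m → q ^ m ≠ 1) (N : ℕ) :
    (∑ d1 ∈ Finset.range (N + 1), ∑ d2 ∈ Finset.range (N + 1),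
      if 2 * d1 + d2 = N then
        (-1 : K) ^ d1 * q ^ (d1 * (d1 + 1) / 2) * pochQ q (d1 + d2) /
          (pochQ q d1 * pochQ q d2)
      else 0) =
    ∑ a1 ∈ Finset.range (N + 1), ∑ b1 ∈ Finset.range (N + 1),
      ∑ a2 ∈ Finset.range (N + 1), ∑ b2 ∈ Finset.range (N + 1),
        if 2 * (a1 + b1) + a2 + b2 = N then
          (-1 : K) ^ (b1 + a2) *
            q ^ ((a1 + b1) * (a1 + b1 + 1) / 2 + a1 * (a1 + 1) / 2 + a2 * (a2 + 1) / 2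
                + a2 * (a1 + b1)) /
            (pochQ q a1 * pochQ q b1 * pochQ q a2 * pochQ q b2)
        else 0 := by
  rw [collapse1 N (fun d1 d2 => (-1:K)^d1 * q^(d1*(d1+1)/2) * pochQ q (d1+d2) /
      (pochQ q d1 * pochQ q d2))]
  rw [collapse2 N (fun a1 b1 a2 b2 => (-1:K)^(b1+a2) *
      q^((a1+b1)*(a1+b1+1)/2 + a1*(a1+1)/2 + a2*(a2+1)/2 + a2*(a1+b1)) /
      (pochQ q a1 * pochQ q b1 * pochQ q a2 * pochQ q b2))]
  rw [sum_triangle N (fun a1 b1 =>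
      if 2*(a1+b1) ≤ N then
        (∑ a2 ∈ Finset.range ((N - 2*(a1+b1)) + 1),
          (-1:K)^(b1+a2) *
            q^((a1+b1)*(a1+b1+1)/2 + a1*(a1+1)/2 + a2*(a2+1)/2 + a2*(a1+b1)) /
            (pochQ q a1 * pochQ q b1 * pochQ q a2 * pochQ q (N - 2*(a1+b1) - a2)))
      else 0)
    (fun a b h => if_neg (by omega))]
  refine Finset.sum_congr rfl fun d1 hd1 => ?_
  have step : ∀ a1 ∈ Finset.range (d1+1),
      (if 2*(a1+(d1-a1)) ≤ N then
        (∑ a2 ∈ Finset.range ((N - 2*(a1+(d1-a1))) + 1),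
          (-1:K)^((d1-a1)+a2) *
            q^((a1+(d1-a1))*(a1+(d1-a1)+1)/2 + a1*(a1+1)/2 + a2*(a2+1)/2 + a2*(a1+(d1-a1))) /
            (pochQ q a1 * pochQ q (d1-a1) * pochQ q a2 * pochQ q (N - 2*(a1+(d1-a1)) - a2)))
      else 0)
      = (if 2*d1 ≤ N then
        (∑ a2 ∈ Finset.range ((N - 2*d1) + 1),
          (-1:K)^((d1-a1)+a2) *
            q^(d1*(d1+1)/2 + a1*(a1+1)/2 + a2*(a2+1)/2 + a2*d1) /
            (pochQ q a1 * pochQ q (d1-a1) * pochQ q a2 * pochQ q (N - 2*d1 - a2)))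
      else 0) := by
    intro a1 ha1
    rw [Finset.mem_range] at ha1
    rw [show a1 + (d1 - a1) = d1 from by omega]
  rw [Finset.sum_congr rfl step]
  by_cases h : 2*d1 ≤ N
  · simp only [if_pos h]
    exact body_expand q hq d1 (N - 2*d1)
  · simp only [if_neg h, Finset.sum_const_zero]
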